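/- Let λ ∈ (√3/2, 1] and let T be a Euclidean triangle with all side lengths at least 2 such that at least two of its three altitudes have length at least 2λ. Then the area of T is at least 2λ, with equality for the isosceles triangle with legs of length 2 and corresponding altitudes of length exactly 2λ. -/

import Mathlib

open Real Metric MeasureTheory
open scoped Pointwise

noncomputable abbrev E2 := EuclideanSpace ℝ (Fin 2)

/-- The planar cross product (determinant) of two vectors. -/
def crossE (u v : E2) : ℝ := u 0 * v 1 - u 1 * v 0

lemma norm2E (w : E2) : ‖w‖ = Real.sqrt (w 0 ^ 2 + w 1 ^ 2) := by
  rw [EuclideanSpace.norm_eq]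
  simp [Fin.sum_univ_two, Real.norm_eq_abs, sq_abs]

lemma mem_line_iff (b c x : E2) :
    x ∈ affineSpan ℝ ({b, c} : Set E2) ↔ ∃ r : ℝ, x = r • (c - b) + b := by
  constructor
  · intro hx
    have hx' : (x - b) +ᵥ b ∈ line[ℝ, b, c] := by
      simpa [vadd_eq_add, sub_add_cancel] using hx
    obtain ⟨r, hr⟩ := (vadd_left_mem_affineSpan_pair).mp hx'
    exact ⟨r, by rw [vsub_eq_sub] at hr; rw [hr, sub_add_cancel]⟩
  · rintro ⟨r, rfl⟩
    simpa [vsub_eq_sub, vadd_eq_add] using smul_vsub_vadd_mem_affineSpan_pair r b c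

lemma ne_zero_sq_sum {v : E2} (hv : v ≠ 0) : 0 < v 0 ^ 2 + v 1 ^ 2 := by
  rcases lt_or_eq_of_le (by positivity : (0:ℝ) ≤ v 0 ^ 2 + v 1 ^ 2) with h | h
  · exact h
  · exfalso; apply hv
    have h0 : v 0 = 0 := by nlinarith [sq_nonneg (v 0), sq_nonneg (v 1)]
    have h1 : v 1 = 0 := by nlinarith [sq_nonneg (v 0), sq_nonneg (v 1)]
    ext i
    fin_cases i <;> simpa [PiLp.zero_apply]

/-- Distance from a point to the line through two distinct points, in terms of
the cross product. -/
lemma infDist_line (p b c : E2) (h : b ≠ c) :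
    infDist p (affineSpan ℝ ({b, c} : Set E2) : Set E2)
      = |crossE (p - b) (c - b)| / dist b c := by
  set u : E2 := p - b with hu
  set v : E2 := c - b with hv
  have hvne : v ≠ 0 := sub_ne_zero.mpr (Ne.symm h)
  have hV : 0 < v 0 ^ 2 + v 1 ^ 2 := ne_zero_sq_sum hvne
  have hnv : ‖v‖ = Real.sqrt (v 0 ^ 2 + v 1 ^ 2) := norm2E v
  have hdist : dist b c = ‖v‖ := by rw [dist_eq_norm, norm_sub_rev]
  have hnvpos : 0 < ‖v‖ := norm_pos_iff.mpr hvne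
  have key : ∀ r : ℝ, ‖u - r • v‖ * ‖v‖ ≥ |crossE u v| := by
    intro r
    have hc : crossE u v = crossE (u - r • v) v := by
      simp only [crossE, PiLp.sub_apply, PiLp.smul_apply, smul_eq_mul]; ring
    rw [hc]
    set w := u - r • v
    have h1 : (crossE w v) ^ 2 ≤ (w 0 ^ 2 + w 1 ^ 2) * (v 0 ^ 2 + v 1 ^ 2) := by
      simp only [crossE]
      nlinarith [sq_nonneg (w 0 * v 0 + w 1 * v 1)]
    have h2 : |crossE w v| = Real.sqrt ((crossE w v) ^ 2) := (Real.sqrt_sq_eq_abs _).symm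
    rw [h2, norm2E w, hnv, ← Real.sqrt_mul (by positivity)]
    exact Real.sqrt_le_sqrt h1
  apply le_antisymm
  · -- choose the foot of the perpendicular
    set r0 : ℝ := (u 0 * v 0 + u 1 * v 1) / (v 0 ^ 2 + v 1 ^ 2) with hr0
    have hq : r0 • v + b ∈ affineSpan ℝ ({b, c} : Set E2) := (mem_line_iff b c _).mpr ⟨r0, rfl⟩
    have hd : dist p (r0 • v + b) = |crossE u v| / ‖v‖ := by
      rw [dist_eq_norm]
      have : p - (r0 • v + b) = u - r0 • v := by rw [hu]; abel
      rw [this, norm2E, hnv]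
      have hexp : (u - r0 • v) 0 ^ 2 + (u - r0 • v) 1 ^ 2
          = (crossE u v) ^ 2 / (v 0 ^ 2 + v 1 ^ 2) := by
        simp only [PiLp.sub_apply, PiLp.smul_apply, smul_eq_mul, hr0, crossE]
        field_simp
        ring
      rw [hexp, Real.sqrt_div (sq_nonneg _), Real.sqrt_sq_eq_abs]
    rw [hdist, ← hd]
    exact infDist_le_dist_of_mem hq
  · by_contra hcon
    rw [not_le, infDist_lt_iff ⟨b, left_mem_affineSpan_pair ℝ b c⟩] at hcon
    obtain ⟨x, hx, hdx⟩ := hcon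
    obtain ⟨r, rfl⟩ := (mem_line_iff b c x).mp hx
    have heq : p - (r • v + b) = u - r • v := by rw [hu]; abel
    rw [dist_eq_norm, heq, hdist, lt_div_iff₀ hnvpos] at hdx
    exact absurd (key r) (not_le.mpr hdx)

def Tstd : Set E2 := {x | 0 ≤ x 0 ∧ 0 ≤ x 1 ∧ x 0 + x 1 ≤ 1}

lemma convex_Tstd : Convex ℝ Tstd := by
  intro x hx y hy s t hs ht hst
  obtain ⟨hx0, hx1, hx2⟩ := hx
  obtain ⟨hy0, hy1, hy2⟩ := hy
  refine ⟨?_, ?_, ?_⟩ <;>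
    simp only [PiLp.add_apply, PiLp.smul_apply, smul_eq_mul] <;> nlinarith

lemma vol_square : volume {x : E2 | x 0 ∈ Set.Icc (0:ℝ) 1 ∧ x 1 ∈ Set.Icc (0:ℝ) 1} = 1 := by
  have hmp := EuclideanSpace.volume_preserving_symm_measurableEquiv_toLp (Fin 2)
  have hset : {x : E2 | x 0 ∈ Set.Icc (0:ℝ) 1 ∧ x 1 ∈ Set.Icc (0:ℝ) 1}
      = (MeasurableEquiv.toLp 2 (Fin 2 → ℝ)).symm ⁻¹' (Set.univ.pi fun _ => Set.Icc (0:ℝ) 1) := by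
    ext x
    rw [Set.mem_preimage, Set.mem_univ_pi]
    simp only [Set.mem_setOf_eq, MeasurableEquiv.toLp_symm_apply, Fin.forall_fin_two]
  rw [hset, hmp.measure_preimage
    (MeasurableSet.univ_pi fun _ => measurableSet_Icc).nullMeasurableSet, volume_pi_pi]
  simp [Real.volume_Icc]

lemma vol_Tstd : volume Tstd = 2⁻¹ := by
  classical
  set e0 : E2 := EuclideanSpace.single 0 (1:ℝ) with he0
  set e1 : E2 := EuclideanSpace.single 1 (1:ℝ) with he1
  set k : E2 := e0 + e1 with hk
  have hk0 : k 0 = 1 := by simp [hk, he0, he1, PiLp.add_apply, EuclideanSpace.single_apply]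
  have hk1 : k 1 = 1 := by simp [hk, he0, he1, PiLp.add_apply, EuclideanSpace.single_apply]
  set T' : Set E2 := k +ᵥ (-Tstd) with hT'
  have hmemT' : ∀ x : E2, x ∈ T' ↔ (0 ≤ 1 - x 0 ∧ 0 ≤ 1 - x 1 ∧ (1 - x 0) + (1 - x 1) ≤ 1) := by
    intro x
    constructor
    · rintro ⟨y, hy, rfl⟩
      rw [Set.mem_neg] at hy
      obtain ⟨h0, h1, h2⟩ := hy
      simp only [vadd_eq_add, PiLp.add_apply, PiLp.neg_apply] at *
      refine ⟨by rw [hk0] at *; linarith, by rw [hk1] at *; linarith, ?_⟩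
      rw [hk0, hk1] at *; linarith
    · rintro ⟨h0, h1, h2⟩
      refine ⟨x - k, ?_, ?_⟩
      · rw [Set.mem_neg]
        refine ⟨?_, ?_, ?_⟩ <;>
          simp only [PiLp.neg_apply, Pi.neg_apply, PiLp.sub_apply, hk0, hk1, Tstd,
            Set.mem_setOf_eq] <;> linarith
      · simp only [vadd_eq_add]; abel
  have hvol' : volume T' = volume Tstd := by
    rw [hT', measure_vadd, Measure.measure_neg]
  have hunion : Tstd ∪ T' = {x : E2 | x 0 ∈ Set.Icc (0:ℝ) 1 ∧ x 1 ∈ Set.Icc (0:ℝ) 1} := by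
    ext x
    simp only [Set.mem_union, hmemT' x, Set.mem_setOf_eq, Set.mem_Icc, Tstd]
    constructor
    · rintro (⟨h0, h1, h2⟩ | ⟨h0, h1, h2⟩) <;> exact ⟨⟨by linarith, by linarith⟩,
        by linarith, by linarith⟩
    · rintro ⟨⟨h0, h0'⟩, h1, h1'⟩
      by_cases h : x 0 + x 1 ≤ 1
      · exact Or.inl ⟨h0, h1, h⟩
      · exact Or.inr ⟨by linarith, by linarith, by linarith⟩
  have hinter : volume (Tstd ∩ T') = 0 := by
    have hsub : Tstd ∩ T' ⊆ (affineSpan ℝ ({e0, e1} : Set E2) : Set E2) := by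
      rintro x ⟨⟨h0, h1, h2⟩, hx'⟩
      obtain ⟨g0, g1, g2⟩ := (hmemT' x).mp hx'
      have hsum : x 0 + x 1 = 1 := by linarith
      refine (mem_line_iff e0 e1 x).mpr ⟨x 1, ?_⟩
      ext i
      fin_cases i <;>
        simp [he0, he1, PiLp.add_apply, PiLp.sub_apply, PiLp.smul_apply,
          EuclideanSpace.single_apply, smul_eq_mul] <;> linarith
    refine measure_mono_null hsub
      (Measure.addHaar_affineSubspace (volume : Measure E2) (affineSpan ℝ ({e0, e1} : Set E2)) ?_)
    intro htop
    have h0mem : (0 : E2) ∈ affineSpan ℝ ({e0, e1} : Set E2) :=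
      htop ▸ AffineSubspace.mem_top ℝ E2 0
    obtain ⟨r, hr⟩ := (mem_line_iff e0 e1 0).mp h0mem
    have hc0 := congrFun (congrArg (fun (z : E2) => (z : Fin 2 → ℝ)) hr) 0
    have hc1 := congrFun (congrArg (fun (z : E2) => (z : Fin 2 → ℝ)) hr) 1
    simp only [he0, he1, PiLp.add_apply, PiLp.sub_apply, PiLp.smul_apply,
      EuclideanSpace.single_apply, smul_eq_mul, PiLp.zero_apply] at hc0 hc1
    norm_num at hc0 hc1
    linarith
  have hT'conv : Convex ℝ T' := (convex_Tstd.neg).vadd k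
  have hkey : volume (Tstd ∪ T') + volume (Tstd ∩ T') = volume Tstd + volume T' :=
    measure_union_add_inter₀ Tstd (hT'conv.nullMeasurableSet (volume : Measure E2))
  rw [hunion, vol_square, hinter, add_zero, hvol'] at hkey
  calc volume Tstd = 2⁻¹ * (2 * volume Tstd) := by
        rw [← mul_assoc, ENNReal.inv_mul_cancel two_ne_zero ENNReal.ofNat_ne_top, one_mul]
    _ = 2⁻¹ * 1 := by rw [two_mul, ← hkey]
    _ = 2⁻¹ := mul_one _

noncomputable def eE0 : E2 := EuclideanSpace.single 0 (1:ℝ)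
noncomputable def eE1 : E2 := EuclideanSpace.single 1 (1:ℝ)

@[simp] lemma eE0_apply0 : eE0 0 = 1 := by simp [eE0, EuclideanSpace.single_apply]
@[simp] lemma eE0_apply1 : eE0 1 = 0 := by simp [eE0, EuclideanSpace.single_apply]
@[simp] lemma eE1_apply0 : eE1 0 = 0 := by simp [eE1, EuclideanSpace.single_apply]
@[simp] lemma eE1_apply1 : eE1 1 = 1 := by simp [eE1, EuclideanSpace.single_apply]

lemma hull_std : convexHull ℝ ({0, eE0, eE1} : Set E2) = Tstd := by
  apply le_antisymm
  · apply convexHull_min _ convex_Tstd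
    rintro x (rfl | rfl | rfl) <;>
      simp [Tstd, Set.mem_setOf_eq]
  · intro x hx
    obtain ⟨h0, h1, h2⟩ := hx
    have hC : Convex ℝ (convexHull ℝ ({0, eE0, eE1} : Set E2)) := convex_convexHull ℝ _
    have hm0 : (0 : E2) ∈ convexHull ℝ ({0, eE0, eE1} : Set E2) :=
      subset_convexHull ℝ _ (by simp)
    have hme0 : eE0 ∈ convexHull ℝ ({0, eE0, eE1} : Set E2) :=
      subset_convexHull ℝ _ (by simp)
    have hme1 : eE1 ∈ convexHull ℝ ({0, eE0, eE1} : Set E2) :=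
      subset_convexHull ℝ _ (by simp)
    by_cases hs : x 0 + x 1 = 0
    · have hx0 : x 0 = 0 := by linarith
      have hx1 : x 1 = 0 := by linarith
      have : x = 0 := by
        ext i; fin_cases i <;> simpa [PiLp.zero_apply]
      rw [this]; exact hm0
    · set s : ℝ := x 0 + x 1 with hsdef
      have hspos : 0 < s := lt_of_le_of_ne (by linarith) (Ne.symm hs)
      have hy : (x 0 / s) • eE0 + (x 1 / s) • eE1
          ∈ convexHull ℝ ({0, eE0, eE1} : Set E2) := by
        apply hC hme0 hme1 (by positivity) (by positivity)
        field_simp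
        exact hsdef.symm
      have hx' : (1 - s) • (0 : E2) + s • ((x 0 / s) • eE0 + (x 1 / s) • eE1)
          ∈ convexHull ℝ ({0, eE0, eE1} : Set E2) := by
        apply hC hm0 hy (by linarith) (le_of_lt hspos)
        ring
      have hxeq : x = (1 - s) • (0 : E2) + s • ((x 0 / s) • eE0 + (x 1 / s) • eE1) := by
        ext i
        fin_cases i <;>
          simp only [PiLp.add_apply, PiLp.smul_apply, PiLp.zero_apply, smul_eq_mul,
            Fin.zero_eta, Fin.mk_one, eE0_apply0, eE0_apply1, eE1_apply0, eE1_apply1] <;>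
          field_simp <;> ring
      rw [hxeq]; exact hx'

noncomputable def lmapE (u v : E2) : E2 →ₗ[ℝ] E2 where
  toFun x := x 0 • u + x 1 • v
  map_add' x y := by
    simp only [PiLp.add_apply, add_smul]; abel
  map_smul' r x := by
    simp only [PiLp.smul_apply, smul_eq_mul, mul_smul, RingHom.id_apply, smul_add]

lemma lmapE_det (u v : E2) : LinearMap.det (lmapE u v) = crossE u v := by
  rw [← LinearMap.det_toMatrix (PiLp.basisFun 2 ℝ (Fin 2)), Matrix.det_fin_two]
  simp only [LinearMap.toMatrix_apply, PiLp.basisFun_repr, PiLp.basisFun_apply,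
    PiLp.toLp_apply, lmapE, LinearMap.coe_mk, AddHom.coe_mk]
  simp [PiLp.add_apply, PiLp.smul_apply, Pi.single_apply, crossE]
  ring

/-- The area of a triangle in the plane, via the cross product. -/
lemma area_formula (a b c : E2) :
    volume (convexHull ℝ ({a, b, c} : Set E2))
      = ENNReal.ofReal (|crossE (b - a) (c - a)| / 2) := by
  set u : E2 := b - a with hu
  set v : E2 := c - a with hv
  have himg : (lmapE u v) '' ({0, eE0, eE1} : Set E2) = {0, u, v} := by
    rw [show ({0, eE0, eE1} : Set E2) = insert 0 (insert eE0 {eE1}) from rfl]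
    rw [Set.image_insert_eq, Set.image_insert_eq, Set.image_singleton]
    have h0 : lmapE u v 0 = 0 := map_zero _
    have h1 : lmapE u v eE0 = u := by
      show (eE0 0) • u + (eE0 1) • v = u
      simp
    have h2 : lmapE u v eE1 = v := by
      show (eE1 0) • u + (eE1 1) • v = v
      simp
    rw [h0, h1, h2]
  have hset : ({a, b, c} : Set E2) = a +ᵥ ((lmapE u v) '' ({0, eE0, eE1} : Set E2)) := by
    rw [himg]
    ext x
    simp only [Set.mem_insert_iff, Set.mem_singleton_iff, Set.mem_vadd_set, vadd_eq_add]
    constructor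
    · rintro (rfl | rfl | rfl)
      · exact ⟨0, Or.inl rfl, by simp⟩
      · exact ⟨u, Or.inr (Or.inl rfl), by simp [hu]⟩
      · exact ⟨v, Or.inr (Or.inr rfl), by simp [hv]⟩
    · rintro ⟨y, (rfl | rfl | rfl), rfl⟩
      · left; simp
      · right; left; simp [hu]
      · right; right; simp [hv]
  rw [hset, convexHull_vadd, ← LinearMap.image_convexHull, hull_std, measure_vadd,
    Measure.addHaar_image_linearMap, vol_Tstd, lmapE_det]
  rw [show |crossE u v| / 2 = |crossE u v| * (2⁻¹ : ℝ) by ring,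
    ENNReal.ofReal_mul (abs_nonneg _)]
  congr 1
  rw [ENNReal.ofReal_inv_of_pos two_pos]; norm_num

lemma affineIndependent_of_cross {a b c : E2} (h : crossE (b - a) (c - a) ≠ 0) :
    AffineIndependent ℝ ![a, b, c] := by
  rw [affineIndependent_iff_not_collinear]
  intro hcol
  have hrange : Set.range ![a, b, c] = {a, b, c} := by
    ext x
    simp only [Set.mem_range, Set.mem_insert_iff, Set.mem_singleton_iff]
    constructor
    · rintro ⟨i, rfl⟩; fin_cases i <;> simp
    · rintro (rfl | rfl | rfl)
      exacts [⟨0, rfl⟩, ⟨1, rfl⟩, ⟨2, rfl⟩]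
  rw [hrange] at hcol
  have hab : a ≠ b := by
    rintro rfl
    apply h
    simp [crossE, sub_self, PiLp.zero_apply]
  have hc : c ∈ affineSpan ℝ ({a, b} : Set E2) :=
    hcol.mem_affineSpan_of_mem_of_ne (by simp) (by simp) (by simp) hab
  obtain ⟨r, rfl⟩ := (mem_line_iff a b c).mp hc
  apply h
  simp only [crossE, PiLp.sub_apply, PiLp.add_apply, PiLp.smul_apply, smul_eq_mul]
  ring

theorem stmt7 (l : ℝ) (hl1 : Real.sqrt 3 / 2 < l) (hl2 : l ≤ 1) :
    (∀ a b c : EuclideanSpace ℝ (Fin 2), AffineIndependent ℝ ![a, b, c] →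
      2 ≤ dist a b → 2 ≤ dist b c → 2 ≤ dist a c →
      ((2 * l ≤ infDist a (affineSpan ℝ {b, c} : Set (EuclideanSpace ℝ (Fin 2))) ∧
        2 * l ≤ infDist b (affineSpan ℝ {a, c} : Set (EuclideanSpace ℝ (Fin 2)))) ∨
       (2 * l ≤ infDist a (affineSpan ℝ {b, c} : Set (EuclideanSpace ℝ (Fin 2))) ∧
        2 * l ≤ infDist c (affineSpan ℝ {a, b} : Set (EuclideanSpace ℝ (Fin 2)))) ∨
       (2 * l ≤ infDist b (affineSpan ℝ {a, c} : Set (EuclideanSpace ℝ (Fin 2))) ∧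
        2 * l ≤ infDist c (affineSpan ℝ {a, b} : Set (EuclideanSpace ℝ (Fin 2))))) →
      ENNReal.ofReal (2 * l) ≤ volume (convexHull ℝ ({a, b, c} : Set (EuclideanSpace ℝ (Fin 2))))) ∧
    (∃ a b c : EuclideanSpace ℝ (Fin 2), AffineIndependent ℝ ![a, b, c] ∧
      dist a b = 2 ∧ dist a c = 2 ∧ 2 ≤ dist b c ∧
      infDist c (affineSpan ℝ {a, b} : Set (EuclideanSpace ℝ (Fin 2))) = 2 * l ∧
      infDist b (affineSpan ℝ {a, c} : Set (EuclideanSpace ℝ (Fin 2))) = 2 * l ∧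
      volume (convexHull ℝ ({a, b, c} : Set (EuclideanSpace ℝ (Fin 2)))) = ENNReal.ofReal (2 * l)) := by
  have hl0 : 0 < l := lt_trans (by positivity) hl1
  constructor
  · -- the area bound
    intro a b c _hind hab hbc hac hcase
    set D : ℝ := crossE (b - a) (c - a) with hD
    have harea := area_formula a b c
    have hDbound : 4 * l ≤ |D| := by
      rcases hcase with ⟨h1, _⟩ | ⟨h1, _⟩ | ⟨h1, _⟩
      · -- altitude from a onto line b c
        have hbc' : b ≠ c := by
          intro hEq; rw [hEq, dist_self] at hbc; linarith
        rw [infDist_line a b c hbc'] at h1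
        have habs : |crossE (a - b) (c - b)| = |D| := by
          have : crossE (a - b) (c - b) = -D := by
            simp only [hD, crossE, PiLp.sub_apply]; ring
          rw [this, abs_neg]
        rw [habs] at h1
        have hdpos : (0:ℝ) < dist b c := by linarith
        rw [le_div_iff₀ hdpos] at h1
        nlinarith [dist_nonneg (x := b) (y := c)]
      · -- altitude from a again
        have hbc' : b ≠ c := by
          intro hEq; rw [hEq, dist_self] at hbc; linarith
        rw [infDist_line a b c hbc'] at h1
        have habs : |crossE (a - b) (c - b)| = |D| := by
          have : crossE (a - b) (c - b) = -D := by
            simp only [hD, crossE, PiLp.sub_apply]; ring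
          rw [this, abs_neg]
        rw [habs] at h1
        have hdpos : (0:ℝ) < dist b c := by linarith
        rw [le_div_iff₀ hdpos] at h1
        nlinarith [dist_nonneg (x := b) (y := c)]
      · -- altitude from b onto line a c
        have hac' : a ≠ c := by
          intro hEq; rw [hEq, dist_self] at hac; linarith
        rw [infDist_line b a c hac'] at h1
        have hdpos : (0:ℝ) < dist a c := by linarith
        rw [le_div_iff₀ hdpos] at h1
        nlinarith [dist_nonneg (x := a) (y := c)]
    rw [harea]
    apply ENNReal.ofReal_le_ofReal
    linarith
  · -- the extremal isosceles triangle
    set s : ℝ := Real.sqrt (1 - l ^ 2) with hsdef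
    have hs0 : 0 ≤ s := Real.sqrt_nonneg _
    have hl2' : l ^ 2 ≤ 1 := by nlinarith
    have hs2 : s ^ 2 = 1 - l ^ 2 := Real.sq_sqrt (by linarith)
    set a : E2 := 0 with ha
    set b : E2 := (2:ℝ) • eE0 with hb
    set c : E2 := (-(2*s)) • eE0 + (2*l) • eE1 with hc
    have hb0 : b 0 = 2 := by simp [hb, PiLp.smul_apply]
    have hb1 : b 1 = 0 := by simp [hb, PiLp.smul_apply]
    have hc0 : c 0 = -(2*s) := by simp [hc, PiLp.add_apply, PiLp.smul_apply]
    have hc1 : c 1 = 2*l := by simp [hc, PiLp.add_apply, PiLp.smul_apply]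
    have ha0 : a 0 = 0 := by simp [ha]
    have ha1 : a 1 = 0 := by simp [ha]
    have hcross : crossE (b - a) (c - a) = 4 * l := by
      simp only [crossE, PiLp.sub_apply, hb0, hb1, hc0, hc1, ha0, ha1]
      ring
    have hdab : dist a b = 2 := by
      rw [dist_eq_norm, norm2E]
      simp only [PiLp.sub_apply, ha0, ha1, hb0, hb1]
      rw [show (0 - 2:ℝ) ^ 2 + (0 - 0:ℝ) ^ 2 = 2 ^ 2 by ring]
      exact Real.sqrt_sq (by norm_num)
    have hdac : dist a c = 2 := by
      rw [dist_eq_norm, norm2E]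
      simp only [PiLp.sub_apply, ha0, ha1, hc0, hc1]
      rw [show (0 - -(2*s):ℝ) ^ 2 + (0 - 2*l:ℝ) ^ 2 = 4 * s ^ 2 + 4 * l ^ 2 by ring, hs2,
        show (4 * (1 - l ^ 2) + 4 * l ^ 2 : ℝ) = 2 ^ 2 by ring]
      exact Real.sqrt_sq (by norm_num)
    have hdbc : 2 ≤ dist b c := by
      rw [dist_eq_norm, norm2E]
      simp only [PiLp.sub_apply, hb0, hb1, hc0, hc1]
      rw [show (2 - -(2*s):ℝ) ^ 2 + (0 - 2*l:ℝ) ^ 2 = 4 * s ^ 2 + 8 * s + 4 + 4 * l ^ 2 by ring,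
        hs2, show (4 * (1 - l ^ 2) + 8 * s + 4 + 4 * l ^ 2 : ℝ) = 8 + 8 * s by ring]
      have : (2:ℝ) = Real.sqrt 4 := by
        rw [show (4:ℝ) = 2 ^ 2 by norm_num, Real.sqrt_sq (by norm_num)]
      rw [this]
      exact Real.sqrt_le_sqrt (by linarith)
    have hane : a ≠ b := by
      intro hEq
      have h' : a 0 = b 0 := by rw [hEq]
      rw [ha0, hb0] at h'
      norm_num at h'
    have hanec : a ≠ c := by
      intro hEq
      have h' : a 1 = c 1 := by rw [hEq]
      rw [ha1, hc1] at h'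
      nlinarith
    refine ⟨a, b, c, ?_, hdab, hdac, hdbc, ?_, ?_, ?_⟩
    · apply affineIndependent_of_cross
      rw [hcross]
      positivity
    · -- altitude from c onto line a b
      rw [infDist_line c a b hane, hdab]
      have : crossE (c - a) (b - a) = -(4*l) := by
        simp only [crossE, PiLp.sub_apply, hb0, hb1, hc0, hc1, ha0, ha1]; ring
      rw [this, abs_neg, abs_of_pos (by positivity)]
      ring
    · -- altitude from b onto line a c
      rw [infDist_line b a c hanec, hdac]
      have : crossE (b - a) (c - a) = 4*l := hcross
      rw [this, abs_of_pos (by positivity)]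
      ring
    · rw [area_formula, hcross, abs_of_pos (by positivity)]
      congr 1
      ring
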